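/- Let T ∈ G be elliptic. Then (i) there exists S ∈ G such that S⁻¹ ∘ T ∘ S is a unitary operator of the Hilbert space H ⊕ ℂ, and (ii) the spectrum of T, as a bounded operator on H ⊕ ℂ, is contained in the unit circle {μ ∈ ℂ : |μ| = 1}. -/

import Mathlib

noncomputable section

variable {H : Type*} [NormedAddCommGroup H] [InnerProductSpace ℂ H] [CompleteSpace H]

/-- The Hermitian form `A((x,z),(y,w)) = ⟨x,y⟩ - z·conj w` on `H ⊕ ℂ`, linear in the
first argument (the paper's convention); `⟨x,y⟩` (linear in `x`) is `inner y x` in Mathlib. -/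
def formA (u v : H × ℂ) : ℂ :=
  (inner ℂ v.1 u.1 : ℂ) - u.2 * (starRingEnd ℂ) v.2

/-- The standard inner product of the Hilbert space `H ⊕ ℂ`, linear in the first argument. -/
def ipStd (u v : H × ℂ) : ℂ :=
  (inner ℂ v.1 u.1 : ℂ) + u.2 * (starRingEnd ℂ) v.2

/-- Membership in the group `G` of bounded bijective linear maps preserving `A`. -/
def memG (T : (H × ℂ) →L[ℂ] (H × ℂ)) : Prop :=
  Function.Bijective T ∧ ∀ u v : H × ℂ, formA (T u) (T v) = formA u v

/-- `T` is elliptic: it has an eigenvector `(x,1)` with `‖x‖ < 1`. -/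
def IsEllipticG (T : (H × ℂ) →L[ℂ] (H × ℂ)) : Prop :=
  ∃ x : H, ‖x‖ < 1 ∧ ∃ μ : ℂ, T (x, 1) = μ • ((x, 1) : H × ℂ)

/-- Points `x` of the closed unit ball with `(x,1)` an eigenvector of `T`. -/
def fixedBall (T : (H × ℂ) →L[ℂ] (H × ℂ)) : Set H :=
  {x : H | ‖x‖ ≤ 1 ∧ ∃ μ : ℂ, T (x, 1) = μ • ((x, 1) : H × ℂ)}

/-- `T` is hyperbolic: not elliptic, with exactly two fixed points in the closed ball. -/
def IsHyperbolicG (T : (H × ℂ) →L[ℂ] (H × ℂ)) : Prop :=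
  ¬ IsEllipticG T ∧ ∃ x y : H, x ≠ y ∧ fixedBall T = {x, y}

/-- `T` is parabolic: not elliptic, with exactly one fixed point in the closed ball. -/
def IsParabolicG (T : (H × ℂ) →L[ℂ] (H × ℂ)) : Prop :=
  ¬ IsEllipticG T ∧ ∃ x : H, fixedBall T = {x}

/-- `M†`, the `A`-orthogonal complement of a subspace `M` of `H ⊕ ℂ`. -/
def daggerA (M : Submodule ℂ (H × ℂ)) : Submodule ℂ (H × ℂ) where
  carrier := {v | ∀ m ∈ M, formA v m = 0}
  add_mem' := by
    intro a b ha hb m hm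
    have h1 := ha m hm
    have h2 := hb m hm
    simp only [formA, Prod.fst_add, Prod.snd_add, inner_add_right, add_mul] at *
    linear_combination h1 + h2
  zero_mem' := by
    intro m hm
    simp [formA]
  smul_mem' := by
    intro c a ha m hm
    have h1 := ha m hm
    simp only [formA, Prod.smul_fst, Prod.smul_snd, inner_smul_right, smul_eq_mul] at *
    linear_combination c * h1

/-- The norm induced by `A` on a subspace where `A` is positive. -/
def nA (v : H × ℂ) : ℝ := Real.sqrt (formA v v).re

/-- Sequential completeness of a subspace for the norm induced by `A`. -/
def CompleteForA (M : Submodule ℂ (H × ℂ)) : Prop :=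
  ∀ f : ℕ → H × ℂ, (∀ n, f n ∈ M) →
    (∀ ε : ℝ, 0 < ε → ∃ N : ℕ, ∀ m n : ℕ, N ≤ m → N ≤ n → nA (f m - f n) < ε) →
    ∃ v ∈ M, ∀ ε : ℝ, 0 < ε → ∃ N : ℕ, ∀ n : ℕ, N ≤ n → nA (f n - v) < ε

end

section
variable {H : Type*} [NormedAddCommGroup H] [InnerProductSpace ℂ H] [CompleteSpace H]

theorem unitary_of_fixes (T' : (H × ℂ) →L[ℂ] (H × ℂ)) (hG : memG T') (μ : ℂ)
    (heig : T' ((0 : H), (1 : ℂ)) = μ • (((0 : H), (1 : ℂ)) : H × ℂ)) :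
    ∀ u v : H × ℂ, ipStd (T' u) (T' v) = ipStd u v := by
  have hmu : μ * (starRingEnd ℂ) μ = 1 := by
    have h1 := hG.2 ((0 : H), (1 : ℂ)) ((0 : H), (1 : ℂ))
    rw [heig] at h1
    simp [formA, Prod.smul_fst, Prod.smul_snd] at h1
    linear_combination h1
  have hmu' : (starRingEnd ℂ) μ ≠ 0 := by
    intro h; rw [h, mul_zero] at hmu; exact one_ne_zero hmu.symm
  have hmu0 : μ ≠ 0 := by
    intro h; rw [h, zero_mul] at hmu; exact one_ne_zero hmu.symm
  have hsnd : ∀ y : H, (T' (y, (0:ℂ))).2 = 0 := by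
    intro y
    have h1 := hG.2 (y, (0:ℂ)) ((0 : H), (1 : ℂ))
    rw [heig] at h1
    simp [formA, Prod.smul_fst, Prod.smul_snd] at h1
    rcases h1 with h | h
    · exact h
    · exact absurd h hmu0
  intro u v
  have hdecomp : ∀ w : H × ℂ, T' w = T' (w.1, (0:ℂ)) + w.2 • (μ • (((0 : H), (1 : ℂ)) : H × ℂ)) := by
    intro w
    have hw : w = (w.1, (0:ℂ)) + w.2 • (((0 : H), (1 : ℂ)) : H × ℂ) := by
      ext <;> simp
    conv_lhs => rw [hw]
    rw [map_add, map_smul, heig]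
  have hfst := hG.2 (u.1, (0:ℂ)) (v.1, (0:ℂ))
  simp only [formA, hsnd, mul_zero, map_zero, zero_mul, sub_zero] at hfst
  rw [hdecomp u, hdecomp v]
  simp only [ipStd, Prod.fst_add, Prod.snd_add, Prod.smul_fst, Prod.smul_snd, smul_zero,
    smul_eq_mul, mul_one, hsnd, add_zero, zero_add, inner_add_left, inner_add_right,
    inner_smul_left, inner_smul_right, inner_zero_left, inner_zero_right, map_mul, mul_zero]
  rw [hfst]
  ring_nf
  linear_combination (u.2 * (starRingEnd ℂ) v.2) * hmu
end

section
variable {H : Type*} [NormedAddCommGroup H] [InnerProductSpace ℂ H] [CompleteSpace H]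

set_option maxHeartbeats 1000000 in
theorem exists_mobius (x : H) (hx : ‖x‖ < 1) :
    ∃ S : (H × ℂ) ≃L[ℂ] (H × ℂ), memG (S : (H × ℂ) →L[ℂ] (H × ℂ)) ∧
      ∃ k : ℂ, k ≠ 0 ∧ S ((0:H), (1:ℂ)) = k • (((x, 1)) : H × ℂ) := by
  rcases eq_or_ne x 0 with rfl | hx0
  · refine ⟨ContinuousLinearEquiv.refl ℂ (H × ℂ), ⟨Function.bijective_id, fun u v => rfl⟩,
      1, one_ne_zero, by simp⟩
  have hnx : 0 < ‖x‖ := norm_pos_iff.mpr hx0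
  have hnx' : (‖x‖ : ℂ) ≠ 0 := by exact_mod_cast hnx.ne'
  have h1x : (0:ℝ) < 1 - ‖x‖^2 := by nlinarith
  obtain ⟨cr, br, hc0, hrel, hb, hcconj, hbconj⟩ :
      ∃ cr br : ℂ, cr ≠ 0 ∧ cr^2 - br^2 = 1 ∧ br = cr * (‖x‖ : ℂ) ∧
        (starRingEnd ℂ) cr = cr ∧ (starRingEnd ℂ) br = br := by
    set c : ℝ := Real.sqrt ((1 - ‖x‖^2)⁻¹) with hc_def
    have hcsq : c^2 = (1 - ‖x‖^2)⁻¹ := Real.sq_sqrt (by positivity)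
    have hcpos : 0 < c := Real.sqrt_pos.mpr (by positivity)
    refine ⟨(c:ℂ), ((c * ‖x‖ : ℝ):ℂ), by exact_mod_cast hcpos.ne', ?_, by push_cast; ring,
      Complex.conj_ofReal c, Complex.conj_ofReal _⟩
    have hab : c^2 - (c * ‖x‖)^2 = 1 := by
      have hne : 1 - ‖x‖^2 ≠ 0 := h1x.ne'
      rw [mul_pow, hcsq]
      field_simp
    exact_mod_cast congrArg (Complex.ofReal) hab
  obtain ⟨e, hee, hxe⟩ : ∃ e : H, (inner ℂ e e : ℂ) = 1 ∧ x = (‖x‖ : ℂ) • e := by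
    refine ⟨((‖x‖ : ℂ))⁻¹ • x, ?_, by rw [smul_smul, mul_inv_cancel₀ hnx', one_smul]⟩
    rw [inner_smul_left, inner_smul_right, inner_self_eq_norm_sq_to_K]
    rw [map_inv₀, Complex.conj_ofReal]
    field_simp
    ring
    rfl
  set φ1 : (H × ℂ) →L[ℂ] ℂ := (innerSL ℂ e).comp (ContinuousLinearMap.fst ℂ H ℂ) with hφ1
  set φ2 : (H × ℂ) →L[ℂ] ℂ := ContinuousLinearMap.snd ℂ H ℂ with hφ2
  set Sf : (H × ℂ) →L[ℂ] (H × ℂ) :=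
    ((ContinuousLinearMap.fst ℂ H ℂ) + ((cr - 1) • φ1 + br • φ2).smulRight e).prod
      (br • φ1 + cr • φ2) with hSf
  set Sg : (H × ℂ) →L[ℂ] (H × ℂ) :=
    ((ContinuousLinearMap.fst ℂ H ℂ) + ((cr - 1) • φ1 - br • φ2).smulRight e).prod
      (cr • φ2 - br • φ1) with hSg
  have hSf_apply : ∀ u : H × ℂ,
      Sf u = (u.1 + ((cr - 1) * (inner ℂ e u.1 : ℂ) + br * u.2) • e,
              br * (inner ℂ e u.1 : ℂ) + cr * u.2) := by
    intro u
    simp [hSf, hφ1, hφ2, ContinuousLinearMap.prod_apply, ContinuousLinearMap.smulRight_apply]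
  have hSg_apply : ∀ u : H × ℂ,
      Sg u = (u.1 + ((cr - 1) * (inner ℂ e u.1 : ℂ) - br * u.2) • e,
              cr * u.2 - br * (inner ℂ e u.1 : ℂ)) := by
    intro u
    simp [hSg, hφ1, hφ2, ContinuousLinearMap.prod_apply, ContinuousLinearMap.smulRight_apply]
  have hgf : ∀ u : H × ℂ, Sg (Sf u) = u := by
    intro u
    rw [hSf_apply, hSg_apply]
    simp only [inner_add_right, inner_smul_right, hee, mul_one]
    ext
    · show _ + _ • e = u.1
      match_scalars
      · ring
      · linear_combination ((inner ℂ e u.1 : ℂ)) * hrel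
    · show _ - _ = u.2
      linear_combination u.2 * hrel
  have hfg : ∀ u : H × ℂ, Sf (Sg u) = u := by
    intro u
    rw [hSg_apply, hSf_apply]
    simp only [inner_add_right, inner_smul_right, hee, mul_one]
    ext
    · show _ + _ • e = u.1
      match_scalars
      · ring
      · linear_combination ((inner ℂ e u.1 : ℂ)) * hrel
    · show _ + _ = u.2
      linear_combination u.2 * hrel
  set S : (H × ℂ) ≃L[ℂ] (H × ℂ) := ContinuousLinearEquiv.equivOfInverse Sf Sg hgf hfg with hS
  refine ⟨S, ⟨S.bijective, ?_⟩, cr, hc0, ?_⟩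
  · intro u v
    show formA (Sf u) (Sf v) = formA u v
    rw [hSf_apply, hSf_apply]
    simp only [formA, inner_add_left, inner_add_right, inner_smul_left, inner_smul_right, hee,
      mul_one, map_mul, map_add, map_sub, map_one, hcconj, hbconj, inner_conj_symm]
    linear_combination ((inner ℂ e u.1 : ℂ) * (inner ℂ v.1 e : ℂ) - u.2 * (starRingEnd ℂ) v.2) * hrel
  · show Sf ((0:H), (1:ℂ)) = _
    rw [hSf_apply]
    ext
    · show (0:H) + ((cr - 1) * (inner ℂ e (0:H) : ℂ) + br * 1) • e = (cr • ((x, (1:ℂ)) : H × ℂ)).1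
      simp only [inner_zero_right, mul_zero, zero_add, mul_one, Prod.smul_fst, smul_eq_mul]
      conv_rhs => rw [hxe, smul_smul, ← hb]
    · show br * (inner ℂ e (0:H) : ℂ) + cr * 1 = (cr • ((x, (1:ℂ)) : H × ℂ)).2
      simp
end

section
variable {H : Type*} [NormedAddCommGroup H] [InnerProductSpace ℂ H] [CompleteSpace H]

theorem ipStd_norm_bound (A : (H × ℂ) →L[ℂ] (H × ℂ))
    (hA : ∀ u v : H × ℂ, ipStd (A u) (A v) = ipStd u v) (u : H × ℂ) :
    ‖A u‖ ≤ Real.sqrt 2 * ‖u‖ := by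
  have key : ∀ w : H × ℂ, (ipStd w w).re = ‖w.1‖^2 + ‖w.2‖^2 := by
    intro w
    simp only [ipStd, Complex.mul_conj, Complex.add_re, inner_self_eq_norm_sq_to_K]
    simp [Complex.normSq_eq_norm_sq]
    norm_cast
  have h1 : ‖(A u).1‖^2 + ‖(A u).2‖^2 = ‖u.1‖^2 + ‖u.2‖^2 := by
    rw [← key, ← key, hA u u]
  have h2 : ‖A u‖^2 ≤ 2 * ‖u‖^2 := by
    have hfst : ‖(A u).1‖ ≤ ‖u.1‖^2 + ‖u.2‖^2 → True := fun _ => trivial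
    have hu1 : ‖u.1‖ ≤ ‖u‖ := by rw [Prod.norm_def]; exact le_max_left _ _
    have hu2 : ‖u.2‖ ≤ ‖u‖ := by rw [Prod.norm_def]; exact le_max_right _ _
    have hA1 : ‖A u‖ = max ‖(A u).1‖ ‖(A u).2‖ := Prod.norm_def _
    rcases max_cases ‖(A u).1‖ ‖(A u).2‖ with ⟨hm, _⟩ | ⟨hm, _⟩ <;> rw [hA1, hm] <;>
      nlinarith [sq_nonneg ‖(A u).1‖, sq_nonneg ‖(A u).2‖, norm_nonneg u.1, norm_nonneg u.2,
        norm_nonneg u]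
  have h3 : (0:ℝ) ≤ Real.sqrt 2 * ‖u‖ := by positivity
  have h4 : ‖A u‖^2 ≤ (Real.sqrt 2 * ‖u‖)^2 := by
    rw [mul_pow, Real.sq_sqrt (by norm_num : (2:ℝ) ≥ 0)]
    exact h2
  calc ‖A u‖ = Real.sqrt (‖A u‖^2) := (Real.sqrt_sq (norm_nonneg _)).symm
    _ ≤ Real.sqrt ((Real.sqrt 2 * ‖u‖)^2) := Real.sqrt_le_sqrt h4
    _ = Real.sqrt 2 * ‖u‖ := Real.sqrt_sq h3

set_option maxHeartbeats 1000000 in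
theorem spec_le_one (A B : (H × ℂ) →L[ℂ] (H × ℂ)) (S : (H × ℂ) ≃L[ℂ] (H × ℂ))
    (hB : ∀ u v : H × ℂ, ipStd (B u) (B v) = ipStd u v)
    (hA : ∀ u : H × ℂ, A u = S (B (S.symm u))) :
    ∀ μ ∈ spectrum ℂ A, ‖μ‖ ≤ 1 := by
  have hBn : ∀ n : ℕ, ∀ u v : H × ℂ, ipStd ((B^n) u) ((B^n) v) = ipStd u v := by
    intro n
    induction n with
    | zero =>
      intro u v
      rw [pow_zero, ContinuousLinearMap.one_apply, ContinuousLinearMap.one_apply]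
    | succ n ih =>
      intro u v
      rw [pow_succ, ContinuousLinearMap.mul_apply, ContinuousLinearMap.mul_apply]
      rw [ih (B u) (B v)]
      exact hB u v
  have hAn : ∀ n : ℕ, ∀ u : H × ℂ, (A^n) u = S ((B^n) (S.symm u)) := by
    intro n
    induction n with
    | zero =>
      intro u
      rw [pow_zero, pow_zero, ContinuousLinearMap.one_apply, ContinuousLinearMap.one_apply,
        S.apply_symm_apply]
    | succ n ih =>
      intro u
      conv_lhs => rw [pow_succ, ContinuousLinearMap.mul_apply, hA u, ih (S (B (S.symm u))),
        S.symm_apply_apply]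
      conv_rhs => rw [pow_succ, ContinuousLinearMap.mul_apply]
  set C : ℝ := ‖(S : (H × ℂ) →L[ℂ] (H × ℂ))‖ * (Real.sqrt 2 * ‖(S.symm : (H × ℂ) →L[ℂ] (H × ℂ))‖)
    with hC
  have hC0 : 0 ≤ C := by positivity
  have hnorm : ∀ n : ℕ, ‖A^n‖ ≤ C := by
    intro n
    refine ContinuousLinearMap.opNorm_le_bound _ hC0 (fun u => ?_)
    rw [hAn n u]
    calc ‖S ((B^n) (S.symm u))‖ ≤ ‖(S : (H × ℂ) →L[ℂ] (H × ℂ))‖ * ‖(B^n) (S.symm u)‖ :=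
          (S : (H × ℂ) →L[ℂ] (H × ℂ)).le_opNorm _
      _ ≤ ‖(S : (H × ℂ) →L[ℂ] (H × ℂ))‖ * (Real.sqrt 2 * ‖S.symm u‖) := by
          exact mul_le_mul_of_nonneg_left (ipStd_norm_bound (B^n) (hBn n) (S.symm u))
            (ContinuousLinearMap.opNorm_nonneg _)
      _ ≤ ‖(S : (H × ℂ) →L[ℂ] (H × ℂ))‖ *
            (Real.sqrt 2 * (‖(S.symm : (H × ℂ) →L[ℂ] (H × ℂ))‖ * ‖u‖)) := by
          have h1 : ‖S.symm u‖ ≤ ‖(S.symm : (H × ℂ) →L[ℂ] (H × ℂ))‖ * ‖u‖ :=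
            (S.symm : (H × ℂ) →L[ℂ] (H × ℂ)).le_opNorm _
          exact mul_le_mul_of_nonneg_left
            (mul_le_mul_of_nonneg_left h1 (Real.sqrt_nonneg _))
            (ContinuousLinearMap.opNorm_nonneg _)
      _ = C * ‖u‖ := by rw [hC]; ring
  haveI : Nontrivial (H × ℂ) := ⟨⟨(0,0),(0,1), by simp [Prod.ext_iff]⟩⟩
  haveI : NormOneClass ((H × ℂ) →L[ℂ] (H × ℂ)) :=
    ⟨by rw [ContinuousLinearMap.one_def]; exact ContinuousLinearMap.norm_id⟩
  intro μ hμ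
  by_contra hcon
  push_neg at hcon
  obtain ⟨n, hn⟩ := pow_unbounded_of_one_lt C hcon
  have hpow : μ^n ∈ spectrum ℂ (A^n) := by
    have himg : μ^n ∈ (fun k => Polynomial.eval k ((Polynomial.X : Polynomial ℂ)^n)) ''
        (spectrum ℂ A) := ⟨μ, hμ, by simp⟩
    have h := spectrum.subset_polynomial_aeval A ((Polynomial.X : Polynomial ℂ)^n) himg
    simpa using h
  have h2 := @spectrum.norm_le_norm_of_mem ℂ ((H × ℂ) →L[ℂ] (H × ℂ)) _
    ContinuousLinearMap.toNormedRing ContinuousLinearMap.toNormedAlgebra _ _ _ _ hpow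
  rw [norm_pow] at h2
  have h3 := h2.trans (hnorm n)
  linarith

set_option maxHeartbeats 1000000 in
theorem elliptic_conjUnitary_and_spectrum (T : (H × ℂ) →L[ℂ] (H × ℂ))
    (hT : memG T) (hell : IsEllipticG T) :
    (∃ S : (H × ℂ) ≃L[ℂ] (H × ℂ), memG (S : (H × ℂ) →L[ℂ] (H × ℂ)) ∧
      (Function.Bijective
        (S.symm.toContinuousLinearMap ∘L T ∘L S.toContinuousLinearMap) ∧
       ∀ u v : H × ℂ,
        ipStd ((S.symm.toContinuousLinearMap ∘L T ∘L S.toContinuousLinearMap) u)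
              ((S.symm.toContinuousLinearMap ∘L T ∘L S.toContinuousLinearMap) v)
          = ipStd u v)) ∧
    (∀ μ ∈ spectrum ℂ T, ‖μ‖ = 1) := by
  obtain ⟨x, hx, μ0, heig⟩ := hell
  obtain ⟨S, hSG, k, hk, hS01⟩ := exists_mobius x hx
  set T' : (H × ℂ) →L[ℂ] (H × ℂ) :=
    S.symm.toContinuousLinearMap ∘L T ∘L S.toContinuousLinearMap with hT'def
  have hT'app : ∀ u : H × ℂ, T' u = S.symm (T (S u)) := fun u => rfl
  have hbij : Function.Bijective T' := by
    have h : Function.Bijective (⇑S.symm ∘ ⇑T ∘ ⇑S) :=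
      (S.symm.bijective.comp hT.1).comp S.bijective
    exact h
  have hSinvG : memG (S.symm.toContinuousLinearMap : (H × ℂ) →L[ℂ] (H × ℂ)) := by
    refine ⟨S.symm.bijective, fun u v => ?_⟩
    show formA (S.symm u) (S.symm v) = formA u v
    rw [← hSG.2 (S.symm u) (S.symm v)]
    simp only [ContinuousLinearEquiv.coe_coe, S.apply_symm_apply]
  have hT'G : memG T' := by
    refine ⟨hbij, fun u v => ?_⟩
    rw [hT'app, hT'app]
    calc formA (S.symm (T (S u))) (S.symm (T (S v)))
        = formA (T (S u)) (T (S v)) := hSinvG.2 _ _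
      _ = formA (S u) (S v) := hT.2 _ _
      _ = formA u v := hSG.2 u v
  have heig' : T' ((0:H), (1:ℂ)) = μ0 • (((0:H), (1:ℂ)) : H × ℂ) := by
    rw [hT'app, hS01, map_smul, heig, smul_comm k μ0, map_smul, ← hS01,
      S.symm_apply_apply]
  have hips := unitary_of_fixes T' hT'G μ0 heig'
  constructor
  · exact ⟨S, hSG, hbij, hips⟩
  · -- spectrum
    have hTeq : ∀ u : H × ℂ, T u = S (T' (S.symm u)) := by
      intro u
      rw [hT'app, S.apply_symm_apply, S.apply_symm_apply]
    have hle1 : ∀ μ ∈ spectrum ℂ T, ‖μ‖ ≤ 1 := spec_le_one T T' S hips hTeq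
    -- inverse
    set Te : (H × ℂ) ≃L[ℂ] (H × ℂ) := ContinuousLinearEquiv.ofBijective T
      (LinearMap.ker_eq_bot.mpr hT.1.1) (LinearMap.range_eq_top.mpr hT.1.2) with hTe
    have hTeapp : ∀ u : H × ℂ, Te u = T u := fun u => rfl
    set Tinv : (H × ℂ) →L[ℂ] (H × ℂ) := Te.symm.toContinuousLinearMap with hTinv
    set B : (H × ℂ) →L[ℂ] (H × ℂ) :=
      S.symm.toContinuousLinearMap ∘L (Tinv ∘L S.toContinuousLinearMap) with hB
    have hBapp : ∀ u : H × ℂ, B u = S.symm (Te.symm (S u)) := fun u => rfl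
    have hT'B : ∀ u : H × ℂ, T' (B u) = u := by
      intro u
      rw [hBapp, hT'app, S.apply_symm_apply, ← hTeapp, Te.apply_symm_apply,
        S.symm_apply_apply]
    have hBip : ∀ u v : H × ℂ, ipStd (B u) (B v) = ipStd u v := by
      intro u v
      have h := hips (B u) (B v)
      rw [hT'B u, hT'B v] at h
      exact h.symm
    have hTinveq : ∀ u : H × ℂ, Tinv u = S (B (S.symm u)) := by
      intro u
      rw [hBapp, S.apply_symm_apply, S.apply_symm_apply]
      rfl
    have hle2 : ∀ ν ∈ spectrum ℂ Tinv, ‖ν‖ ≤ 1 := spec_le_one Tinv B S hBip hTinveq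
    set uT : ((H × ℂ) →L[ℂ] (H × ℂ))ˣ :=
      { val := T
        inv := Tinv
        val_inv := ContinuousLinearMap.ext fun u => by
          rw [ContinuousLinearMap.mul_apply, ContinuousLinearMap.one_apply]
          show T (Te.symm u) = u
          rw [← hTeapp, Te.apply_symm_apply]
        inv_val := ContinuousLinearMap.ext fun u => by
          rw [ContinuousLinearMap.mul_apply, ContinuousLinearMap.one_apply]
          show Te.symm (T u) = u
          rw [← hTeapp, Te.symm_apply_apply] } with huT
    intro μ hμ
    have hμ0 : μ ≠ 0 := by
      intro h
      rw [h] at hμ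
      exact spectrum.zero_notMem ℂ ⟨uT, rfl⟩ hμ
    have hinvmem : μ⁻¹ ∈ spectrum ℂ Tinv :=
      (spectrum.inv_mem_iff (r := Units.mk0 μ hμ0) (a := uT)).mp hμ
    have h1 := hle1 μ hμ
    have h2 := hle2 μ⁻¹ hinvmem
    rw [norm_inv] at h2
    have h3 : 0 < ‖μ‖ := norm_pos_iff.mpr hμ0
    have h4 : ‖μ‖ * ‖μ‖⁻¹ = 1 := mul_inv_cancel₀ h3.ne'
    nlinarith
end
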